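/- Let ν be an M×N real matrix of rank M, K = N − M, R an N×M real matrix, c¹,…,c^K a basis of ker ν assembled into the N×K matrix C, and A = [R | C]. Suppose Γ₁,…,Γ_L are pairwise non-intersecting buffering structures: for s = 1,…,L there are pairwise disjoint chemical subsets 𝔪_s, pairwise disjoint reaction subsets 𝔫_s, and pairwise disjoint kernel-index subsets I_s such that (i) R(n,m) = 0 for every m ∈ 𝔪_s and n ∉ 𝔫_s; (ii) c^α(n) = 0 for every α ∈ I_s and n ∉ 𝔫_s; and (iii) |𝔪_s| + |I_s| = |𝔫_s|. Let A_{Γs} be the submatrix of A with rows 𝔫_s and columns 𝔪_s ∪ I_s, and let A_{Γ̄} be the submatrix with rows the complement of 𝔫₁∪…∪𝔫_L and columns the complement of 𝔪₁∪…∪𝔪_L together with the kernel columns not in I₁∪…∪I_L. Then |det(A)| = (∏_{s=1}^{L} |det(A_{Γs})|) · |det(A_{Γ̄})|. -/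

import Mathlib

open Matrix

lemma pMap_bij {γ : Type*} [DecidableEq γ] {L : ℕ} (F : Fin L → Finset γ)
    (hd : ∀ s t, s ≠ t → Disjoint (F s) (F t)) :
    Function.Bijective (Sum.elim (fun p : Σ s, {x // x ∈ F s} => p.2.1)
      (fun x : {x : γ // ∀ s, x ∉ F s} => x.1)) := by
  constructor
  · rintro (⟨s, x, hx⟩ | ⟨x, hx⟩) (⟨t, y, hy⟩ | ⟨y, hy⟩) h <;>
      simp only [Sum.elim_inl, Sum.elim_inr] at h
    · rcases eq_or_ne s t with rfl | hst
      · subst h; rfl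
      · rw [← h] at hy
        exact absurd hy (Finset.disjoint_left.mp (hd s t hst) hx)
    · rw [h] at hx; exact absurd hx (hy s)
    · rw [← h] at hy; exact absurd hy (hx t)
    · subst h; rfl
  · intro x
    by_cases h : ∃ s, x ∈ F s
    · obtain ⟨s, hs⟩ := h; exact ⟨Sum.inl ⟨s, x, hs⟩, rfl⟩
    · exact ⟨Sum.inr ⟨x, fun s hs => h ⟨s, hs⟩⟩, rfl⟩

lemma det_blockDiag' : ∀ (n : ℕ) {ι : Type*} [Fintype ι] [DecidableEq ι]
    {α : ι → Type*} [∀ i, Fintype (α i)] [∀ i, DecidableEq (α i)]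
    (D : ∀ i, Matrix (α i) (α i) ℝ), Fintype.card ι ≤ n →
    (Matrix.blockDiagonal' D).det = ∏ i, (D i).det := by
  intro n
  induction n with
  | zero =>
    intro ι _ _ α _ _ D hc
    have hι : IsEmpty ι := by
      rw [← Fintype.card_eq_zero_iff]; omega
    rw [Matrix.det_isEmpty, Finset.univ_eq_empty, Finset.prod_empty]
  | succ n IH =>
    intro ι _ _ α _ _ D hc
    rcases isEmpty_or_nonempty ι with hι | hι
    · rw [Matrix.det_isEmpty, Finset.univ_eq_empty, Finset.prod_empty]
    · obtain ⟨i₀⟩ := id hι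
      set f : (α i₀ ⊕ Σ j : {j : ι // j ≠ i₀}, α j.1) → Σ i, α i :=
        Sum.elim (fun a => ⟨i₀, a⟩) (fun p => ⟨p.1.1, p.2⟩) with hfdef
      have hf : Function.Bijective f := by
        constructor
        · rintro (a | ⟨⟨j, hj⟩, a⟩) (b | ⟨⟨j', hj'⟩, b⟩) h <;>
            simp only [hfdef, Sum.elim_inl, Sum.elim_inr] at h
          · obtain ⟨-, h2⟩ := Sigma.mk.inj_iff.mp h
            rw [Sum.inl.injEq]; exact eq_of_heq h2
          · exact absurd (Sigma.mk.inj_iff.mp h).1.symm hj'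
          · exact absurd (Sigma.mk.inj_iff.mp h).1 hj
          · obtain ⟨h1, h2⟩ := Sigma.mk.inj_iff.mp h
            subst h1
            rw [Sum.inr.injEq]
            exact Sigma.ext rfl h2
        · rintro ⟨i, a⟩
          by_cases h : i = i₀
          · subst h; exact ⟨Sum.inl a, rfl⟩
          · exact ⟨Sum.inr ⟨⟨i, h⟩, a⟩, rfl⟩
      have hsub : (Matrix.blockDiagonal' D).submatrix (Equiv.ofBijective f hf)
            (Equiv.ofBijective f hf)
          = Matrix.fromBlocks (D i₀) 0 0
              (Matrix.blockDiagonal' (fun j : {j : ι // j ≠ i₀} => D j.1)) := by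
        ext x y
        rcases x with a | ⟨⟨j, hj⟩, a⟩ <;> rcases y with b | ⟨⟨j', hj'⟩, b⟩ <;>
          simp only [Matrix.submatrix_apply, Equiv.ofBijective_apply, hfdef,
            Sum.elim_inl, Sum.elim_inr, Matrix.fromBlocks_apply₁₁,
            Matrix.fromBlocks_apply₁₂, Matrix.fromBlocks_apply₂₁,
            Matrix.fromBlocks_apply₂₂]
        · exact Matrix.blockDiagonal'_apply_eq D i₀ a b
        · exact (Matrix.blockDiagonal'_apply_ne D a b (fun hh => hj' hh.symm)).trans rfl
        · exact Matrix.blockDiagonal'_apply_ne D a b hj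
        · by_cases hjj : j = j'
          · subst hjj
            exact (Matrix.blockDiagonal'_apply_eq D j a b).trans
              (Matrix.blockDiagonal'_apply_eq (fun j : {j : ι // j ≠ i₀} => D j.1)
                ⟨j, hj⟩ a b).symm
          · exact (Matrix.blockDiagonal'_apply_ne D a b hjj).trans
              (Matrix.blockDiagonal'_apply_ne (fun j : {j : ι // j ≠ i₀} => D j.1) a b
                (fun hh => hjj (congrArg Subtype.val hh))).symm
      have hcard : Fintype.card {j : ι // j ≠ i₀} ≤ n := by
        have h2 := Fintype.card_subtype_compl (fun j : ι => j = i₀)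
        simp only [Fintype.card_subtype_eq] at h2
        have h1 : 1 ≤ Fintype.card ι := Fintype.card_pos
        simp only [ne_eq]
        omega
      rw [← Matrix.det_submatrix_equiv_self (Equiv.ofBijective f hf), hsub,
        Matrix.det_fromBlocks_zero₂₁, IH _ hcard,
        Fintype.prod_eq_mul_prod_compl i₀,
        Finset.prod_subtype (p := fun j : ι => j ≠ i₀) ({i₀}ᶜ : Finset ι) (by simp) (fun i => (D i).det)]

/-- The square `N × N` matrix obtained by placing the columns of an `N × M` matrix `X`
before the columns of an `N × K` matrix `Y`, given `M + K = N`. -/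
noncomputable def catCols {N M K : ℕ} (h : M + K = N)
    (X : Matrix (Fin N) (Fin M) ℝ) (Y : Matrix (Fin N) (Fin K) ℝ) :
    Matrix (Fin N) (Fin N) ℝ :=
  (Matrix.fromCols X Y).submatrix id (fun j => finSumFinEquiv.symm (Fin.cast h.symm j))

/-- The submatrix of the augmented matrix `[R | C]` with rows restricted to the reactions
satisfying `Pn` and columns restricted to the chemicals satisfying `Pm` together with the
kernel columns satisfying `Pk`. -/
def subBlock {M N K : ℕ} (R : Matrix (Fin N) (Fin M) ℝ) (C : Matrix (Fin N) (Fin K) ℝ)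
    (Pn : Fin N → Prop) (Pm : Fin M → Prop) (Pk : Fin K → Prop) :
    Matrix {n // Pn n} ({m // Pm m} ⊕ {α // Pk α}) ℝ :=
  Matrix.fromCols (R.submatrix (fun i => i.1) (fun j => j.1))
    (C.submatrix (fun i => i.1) (fun j => j.1))

/-- factorization of `|det A|` along `L` pairwise non-intersecting buffering
structures `Γ₁, …, Γ_L`:
`|det A| = (∏ s, |det A_{Γ s}|) * |det A_{Γ̄}|`. -/
theorem statement9 {M N K L : ℕ} (hK : M + K = N)
    (ν : Matrix (Fin M) (Fin N) ℝ) (hrank : ν.rank = M)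
    (R : Matrix (Fin N) (Fin M) ℝ) (C : Matrix (Fin N) (Fin K) ℝ)
    (hC : ∃ b : Module.Basis (Fin K) ℝ (LinearMap.ker ν.mulVecLin),
        ∀ k n, (b k).1 n = C n k)
    (𝔪 : Fin L → Finset (Fin M)) (𝔫 : Fin L → Finset (Fin N)) (I : Fin L → Finset (Fin K))
    (hmdisj : ∀ s t, s ≠ t → Disjoint (𝔪 s) (𝔪 t))
    (hndisj : ∀ s t, s ≠ t → Disjoint (𝔫 s) (𝔫 t))
    (hIdisj : ∀ s t, s ≠ t → Disjoint (I s) (I t))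
    (h1 : ∀ s, ∀ m ∈ 𝔪 s, ∀ n ∉ 𝔫 s, R n m = 0)
    (h2 : ∀ s, ∀ α ∈ I s, ∀ n ∉ 𝔫 s, C n α = 0)
    (h3 : ∀ s, (𝔪 s).card + (I s).card = (𝔫 s).card)
    (e : ∀ s, {n // n ∈ 𝔫 s} ≃ ({m // m ∈ 𝔪 s} ⊕ {α // α ∈ I s}))
    (e' : {n : Fin N // ∀ s, n ∉ 𝔫 s} ≃
        ({m : Fin M // ∀ s, m ∉ 𝔪 s} ⊕ {α : Fin K // ∀ s, α ∉ I s})) :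
    |(catCols hK R C).det| =
      (∏ s, |((subBlock R C (· ∈ 𝔫 s) (· ∈ 𝔪 s) (· ∈ I s)).submatrix id (e s)).det|) *
      |((subBlock R C (fun n => ∀ s, n ∉ 𝔫 s) (fun m => ∀ s, m ∉ 𝔪 s)
          (fun α => ∀ s, α ∉ I s)).submatrix id e').det| := by
  classical
  let ρ : ((Σ s : Fin L, {n // n ∈ 𝔫 s}) ⊕ {n : Fin N // ∀ s, n ∉ 𝔫 s}) ≃ Fin N :=
    Equiv.ofBijective _ (pMap_bij 𝔫 hndisj)
  let σm : ((Σ s : Fin L, {m // m ∈ 𝔪 s}) ⊕ {m : Fin M // ∀ s, m ∉ 𝔪 s}) ≃ Fin M :=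
    Equiv.ofBijective _ (pMap_bij 𝔪 hmdisj)
  let σk : ((Σ s : Fin L, {α // α ∈ I s}) ⊕ {α : Fin K // ∀ s, α ∉ I s}) ≃ Fin K :=
    Equiv.ofBijective _ (pMap_bij I hIdisj)
  let σc : ((Σ s : Fin L, {n // n ∈ 𝔫 s}) ⊕ {n : Fin N // ∀ s, n ∉ 𝔫 s}) ≃ Fin N :=
    (Equiv.sumCongr (Equiv.sigmaCongrRight e) e').trans
      ((((Equiv.sigmaSumDistrib _ _).sumCongr (Equiv.refl _)).trans
        (Equiv.sumSumSumComm _ _ _ _)).trans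
        (((Equiv.sumCongr σm σk).trans finSumFinEquiv).trans (finCongr hK)))
  have hσ1 : ∀ (s : Fin L) (j : {n // n ∈ 𝔫 s}), σc (Sum.inl ⟨s, j⟩)
      = finCongr hK (finSumFinEquiv (Sum.map Subtype.val Subtype.val (e s j))) := by
    intro s j
    rcases h : e s j with m | k <;>
      simp [σc, σm, σk, Equiv.sigmaSumDistrib, Equiv.sumSumSumComm, h]
  have hσ2 : ∀ (b : {n : Fin N // ∀ s, n ∉ 𝔫 s}), σc (Sum.inr b)
      = finCongr hK (finSumFinEquiv (Sum.map Subtype.val Subtype.val (e' b))) := by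
    intro b
    rcases h : e' b with m | k <;>
      simp [σc, σm, σk, Equiv.sigmaSumDistrib, Equiv.sumSumSumComm, h]
  have hA : ∀ (i : Fin N) (x : Fin M ⊕ Fin K),
      catCols hK R C i (finCongr hK (finSumFinEquiv x)) = Sum.elim (R i) (C i) x := by
    intro i x
    simp [catCols, Matrix.fromCols]
  have key := Matrix.abs_det_submatrix_equiv_equiv ρ σc (catCols hK R C)
  set B := (catCols hK R C).submatrix ρ σc with hBdef
  have hB : B = Matrix.fromBlocks
      (Matrix.blockDiagonal' (fun s =>
        (subBlock R C (· ∈ 𝔫 s) (· ∈ 𝔪 s) (· ∈ I s)).submatrix id (e s)))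
      (Matrix.of fun p b => B (Sum.inl p) (Sum.inr b)) 0
      ((subBlock R C (fun n => ∀ s, n ∉ 𝔫 s) (fun m => ∀ s, m ∉ 𝔪 s)
          (fun α => ∀ s, α ∉ I s)).submatrix id e') := by
    ext x y
    rcases x with ⟨s, i⟩ | b <;> rcases y with ⟨t, j⟩ | b'
    · have hρ : ρ (Sum.inl ⟨s, i⟩) = i.1 := rfl
      show catCols hK R C (ρ (Sum.inl ⟨s, i⟩)) (σc (Sum.inl ⟨t, j⟩)) = _
      rw [hρ, hσ1, hA]
      by_cases hst : s = t
      · subst hst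
        rw [Matrix.fromBlocks_apply₁₁, Matrix.blockDiagonal'_apply_eq]
        rcases h : e s j with m | k <;>
          simp [h, subBlock, Matrix.fromCols]
      · rw [Matrix.fromBlocks_apply₁₁, Matrix.blockDiagonal'_apply_ne _ _ _ hst]
        have hni : i.1 ∉ 𝔫 t := fun hmem =>
          Finset.disjoint_left.mp (hndisj s t hst) i.2 hmem
        rcases h : e t j with m | k
        · simpa [h] using h1 t m.1 m.2 i.1 hni
        · simpa [h] using h2 t k.1 k.2 i.1 hni
    · rfl
    · have hρ : ρ (Sum.inr b) = b.1 := rfl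
      show catCols hK R C (ρ (Sum.inr b)) (σc (Sum.inl ⟨t, j⟩)) = _
      rw [hρ, hσ1, hA, Matrix.fromBlocks_apply₂₁]
      rcases h : e t j with m | k
      · simpa [h] using h1 t m.1 m.2 b.1 (b.2 t)
      · simpa [h] using h2 t k.1 k.2 b.1 (b.2 t)
    · have hρ : ρ (Sum.inr b) = b.1 := rfl
      show catCols hK R C (ρ (Sum.inr b)) (σc (Sum.inr b')) = _
      rw [hρ, hσ2, hA, Matrix.fromBlocks_apply₂₂]
      rcases h : e' b' with m | k <;>
        simp [h, subBlock, Matrix.fromCols]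
  rw [← key, hB, Matrix.det_fromBlocks_zero₂₁,
    det_blockDiag' L (fun s =>
      (subBlock R C (· ∈ 𝔫 s) (· ∈ 𝔪 s) (· ∈ I s)).submatrix id (e s))
      (by simp), abs_mul, Finset.abs_prod]
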